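/- Suppose an online linear optimization algorithm produces iterates w_1, w_2, ... ∈ ℝ^d with the property that for every T ≥ 1 and every loss sequence (g_t)_{t∈[T]} with ‖g_t‖ ≤ G, it holds that Σ_{t=1}^T ⟨g_t, w_t⟩ ≤ εG (where w_t may depend on g_1,...,g_{t-1}). Then ‖w_t‖ ≤ ε 2^{t-1} for all t. -/

import Mathlib

open scoped RealInnerProductSpace

/-- If an OLO algorithm `A` (mapping loss histories to iterates) guarantees
`Σ_{t=1}^T ⟨g_t, w_t⟩ ≤ εG` for every horizon and every loss sequence with `‖g_t‖ ≤ G`,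
then its iterates satisfy `‖w_t‖ ≤ ε 2^{t-1}`, i.e. the iterate produced after
seeing `t` losses has norm at most `ε 2^t`. -/
theorem stmt7 {d : ℕ} (G ε : ℝ) (hG : 0 < G) (hε : 0 < ε)
    (A : List (EuclideanSpace ℝ (Fin d)) → EuclideanSpace ℝ (Fin d))
    (hreg : ∀ g : ℕ → EuclideanSpace ℝ (Fin d), (∀ t, ‖g t‖ ≤ G) →
      ∀ T : ℕ, ∑ t ∈ Finset.range T, ⟪g t, A ((List.range t).map g)⟫ ≤ ε * G) :
    ∀ g : ℕ → EuclideanSpace ℝ (Fin d), (∀ t, ‖g t‖ ≤ G) →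
      ∀ t : ℕ, ‖A ((List.range t).map g)‖ ≤ ε * 2 ^ t := by
  intro g hg t
  induction t using Nat.strong_induction_on with
  | _ t ih =>
  set w := A ((List.range t).map g) with hwdef
  by_cases hw0 : w = 0
  · rw [hw0, norm_zero]; positivity
  · have hwn : (0:ℝ) < ‖w‖ := norm_pos_iff.mpr hw0
    set v : EuclideanSpace ℝ (Fin d) := ((G/‖w‖)) • w with hvdef
    have hnv : ‖v‖ = G := by
      rw [hvdef, norm_smul, Real.norm_eq_abs, abs_of_nonneg (by positivity)]
      field_simp
    set g' : ℕ → EuclideanSpace ℝ (Fin d) := fun s => if s < t then g s else v with hg'def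
    have hg' : ∀ s, ‖g' s‖ ≤ G := by
      intro s
      by_cases hs : s < t
      · simp [hg'def, hs]; exact hg s
      · simp [hg'def, hs, hnv]
    have hpre : ∀ s, s ≤ t → (List.range s).map g' = (List.range s).map g := by
      intro s hs
      apply List.map_congr_left
      intro x hx
      have : x < s := List.mem_range.mp hx
      simp [hg'def, lt_of_lt_of_le this hs]
    have hsum := hreg g' hg' (t + 1)
    rw [Finset.sum_range_succ] at hsum
    have hlast : ⟪g' t, A ((List.range t).map g')⟫ = G * ‖w‖ := by
      rw [hpre t le_rfl, ← hwdef]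
      have : g' t = v := by simp [hg'def]
      rw [this, hvdef, real_inner_smul_left, real_inner_self_eq_norm_sq]
      field_simp
    have hterm : ∀ s ∈ Finset.range t,
        (-(G * (ε * 2 ^ s)) : ℝ) ≤ ⟪g' s, A ((List.range s).map g')⟫ := by
      intro s hs
      have hst : s < t := Finset.mem_range.mp hs
      rw [hpre s hst.le]
      have heq : g' s = g s := by simp [hg'def, hst]
      rw [heq]
      have h1 : |⟪g s, A ((List.range s).map g)⟫| ≤ ‖g s‖ * ‖A ((List.range s).map g)‖ :=
        abs_real_inner_le_norm _ _
      have h2 : ‖g s‖ * ‖A ((List.range s).map g)‖ ≤ G * (ε * 2 ^ s) := by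
        apply mul_le_mul (hg s) (ih s hst) (norm_nonneg _) hG.le
      calc (-(G * (ε * 2 ^ s)) : ℝ) ≤ -(‖g s‖ * ‖A ((List.range s).map g)‖) := by linarith
        _ ≤ -|⟪g s, A ((List.range s).map g)⟫| := by linarith
        _ ≤ _ := neg_abs_le _
    have hsumlb : ∑ s ∈ Finset.range t, (-(G * (ε * 2 ^ s)) : ℝ) ≤
        ∑ s ∈ Finset.range t, ⟪g' s, A ((List.range s).map g')⟫ :=
      Finset.sum_le_sum hterm
    have hgeo : ∑ s ∈ Finset.range t, (G * (ε * 2 ^ s) : ℝ) = G * ε * (2 ^ t - 1) := by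
      rw [← Finset.mul_sum, ← Finset.mul_sum, geom_sum_eq (by norm_num : (2:ℝ) ≠ 1)]
      ring
    rw [hlast] at hsum
    have hneg : ∑ s ∈ Finset.range t, (-(G * (ε * 2 ^ s)) : ℝ) = -(G * ε * (2 ^ t - 1)) := by
      rw [Finset.sum_neg_distrib, hgeo]
    have hsum2 : -(G * ε * (2 ^ t - 1)) + G * ‖w‖ ≤ ε * G := by
      rw [← hneg]; linarith
    have : G * ‖w‖ ≤ G * (ε * 2 ^ t) := by nlinarith [hsum2]
    exact le_of_mul_le_mul_left this hG
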